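/- Let W be a shuffle of k decreasing arithmetic progressions: i.e., for each i let T_i = (a_i, a_i − 1, …, a_i − (n_i − 1)) be a decreasing run of integers, and let (c₁,…,c_n) be obtained by interleaving the T_i via a permutation w increasing on each block. Then the flag Fil_j = span(e_{w⁻¹(1)}, …, e_{w⁻¹(j)}) in the direct sum of Jordan blocks ⊕_i Sp_{n_i} is stable under the monodromy operator N. -/
import Mathlib


/-- Let `W` be a shuffle of `k` decreasing arithmetic progressions: for each `i`
let `T_i = (a_i, a_i - 1, …, a_i - (n_i - 1))` be a decreasing run of integers, and let
`(c₁, …, c_n)` be obtained by interleaving the `T_i` via a permutation `w` increasing on each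
block.  Then the flag `Fil_j = span(e_{w⁻¹(1)}, …, e_{w⁻¹(j)})` in the direct sum of Jordan
blocks `⊕ᵢ Sp_{n_i}` is stable under the monodromy operator `N` (which satisfies
`N e_{(i,0)} = 0` and `N e_{(i,j+1)} = e_{(i,j)}` within each block). -/
theorem stmt_13 (K : Type*) [Field K] (k n : ℕ) (sizes : Fin k → ℕ) (hn : n = ∑ i, sizes i)
    (start : Fin k → ℕ)
    (hstart : ∀ i : Fin k, start i = ∑ j ∈ Finset.univ.filter (fun j => j < i), sizes j)
    (block : Fin k → Finset (Fin n))
    (hblock : ∀ (i : Fin k) (t : Fin n),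
      t ∈ block i ↔ start i ≤ (t : ℕ) ∧ (t : ℕ) < start i + sizes i)
    (a : Fin k → ℤ) (c : Fin n → ℤ)
    (hc : ∀ (i : Fin k), ∀ t ∈ block i, c t = a i - (((t : ℕ) : ℤ) - (start i : ℤ)))
    (N : (Fin n → K) →ₗ[K] Fin n → K)
    (hN0 : ∀ (i : Fin k) (t : Fin n), t ∈ block i → (t : ℕ) = start i →
      N (Pi.single t 1) = 0)
    (hNsucc : ∀ (i : Fin k) (s t : Fin n), s ∈ block i → t ∈ block i → (s : ℕ) + 1 = (t : ℕ) →
      N (Pi.single t 1) = Pi.single s 1)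
    (w : Equiv.Perm (Fin n))
    (hw : ∀ (i : Fin k), ∀ s ∈ block i, ∀ t ∈ block i, s < t → w s < w t)
    (j : ℕ) :
    ∀ x ∈ Submodule.span K
        ((fun t : Fin n => (Pi.single (w.symm t) 1 : Fin n → K)) '' {t : Fin n | (t : ℕ) < j}),
      N x ∈ Submodule.span K
        ((fun t : Fin n => (Pi.single (w.symm t) 1 : Fin n → K)) '' {t : Fin n | (t : ℕ) < j}) := by
  set S : Set (Fin n → K) :=
    (fun t : Fin n => (Pi.single (w.symm t) 1 : Fin n → K)) '' {t : Fin n | (t : ℕ) < j} with hS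
  -- every index lies in some block
  have hcov : ∀ u : Fin n, ∃ i : Fin k, u ∈ block i := by
    intro u
    have hun : (u : ℕ) < n := u.2
    have hk : 0 < k := by
      rcases Nat.eq_zero_or_pos k with hk0 | hk0
      · exfalso
        subst hk0
        simp at hn
        omega
      · exact hk0
    classical
    set T : Finset (Fin k) := Finset.univ.filter (fun i => start i ≤ (u : ℕ)) with hT
    have hT0 : (⟨0, hk⟩ : Fin k) ∈ T := by
      simp only [hT, Finset.mem_filter, Finset.mem_univ, true_and]
      have : Finset.univ.filter (fun j : Fin k => j < (⟨0, hk⟩ : Fin k)) = ∅ := by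
        apply Finset.filter_false_of_mem
        intro j _
        simp [Fin.lt_def]
      rw [hstart, this]
      simp
    have hTne : T.Nonempty := ⟨_, hT0⟩
    set i := T.max' hTne with hi
    have hile : start i ≤ (u : ℕ) := by
      have := T.max'_mem hTne
      simpa [hT] using this
    refine ⟨i, (hblock i u).2 ⟨hile, ?_⟩⟩
    by_contra hlt
    push_neg at hlt
    rcases Nat.lt_or_ge (i.1 + 1) k with hsucc | hlast
    · set i' : Fin k := ⟨i.1 + 1, hsucc⟩ with hi'
      have hfilter : Finset.univ.filter (fun j : Fin k => j < i')
          = insert i (Finset.univ.filter (fun j : Fin k => j < i)) := by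
        ext m
        simp only [Finset.mem_filter, Finset.mem_univ, true_and, Finset.mem_insert]
        constructor
        · intro hm
          have : m.1 < i.1 + 1 := hm
          rcases Nat.lt_succ_iff_lt_or_eq.1 this with h | h
          · exact Or.inr h
          · exact Or.inl (Fin.ext h)
        · rintro (rfl | hm)
          · exact Nat.lt_succ_self _
          · exact Nat.lt_succ_of_lt hm
      have hstart' : start i' = start i + sizes i := by
        rw [hstart, hstart, hfilter, Finset.sum_insert (by
          simp only [Finset.mem_filter, Finset.mem_univ, true_and]
          exact lt_irrefl i)]
        ring
      have : i' ∈ T := by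
        simp only [hT, Finset.mem_filter, Finset.mem_univ, true_and, hstart']
        exact hlt
      have := T.le_max' i' this
      have h2 : i.1 + 1 ≤ i.1 := this
      omega
    · -- i is the last block; start i + sizes i = n
      have hrest : Finset.univ.filter (fun j : Fin k => ¬ j < i) = {i} := by
        ext m
        simp only [Finset.mem_filter, Finset.mem_univ, true_and, Finset.mem_singleton, not_lt]
        constructor
        · intro hm
          have h1 : (i : ℕ) ≤ (m : ℕ) := hm
          have h2 : (m : ℕ) < k := m.2
          exact Fin.ext (by omega)
        · rintro rfl; exact le_refl _
      have : n = start i + sizes i := by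
        rw [hn, hstart, ← Finset.sum_filter_add_sum_filter_not Finset.univ
          (fun j : Fin k => j < i), hrest, Finset.sum_singleton]
      omega
  -- main argument
  have hsub : S ⊆ ((Submodule.span K S).comap N : Set (Fin n → K)) := by
    rintro _ ⟨t, ht, rfl⟩
    simp only [Set.mem_setOf_eq] at ht
    simp only [SetLike.mem_coe, Submodule.mem_comap]
    set u := w.symm t with hu
    obtain ⟨i, hui⟩ := hcov u
    obtain ⟨h1, h2⟩ := (hblock i u).1 hui
    rcases Nat.eq_or_lt_of_le h1 with heq | hlt
    · rw [hN0 i u hui heq.symm]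
      exact Submodule.zero_mem _
    · have hupos : 0 < (u : ℕ) := by omega
      set s : Fin n := ⟨(u : ℕ) - 1, by omega⟩ with hs
      have hsi : s ∈ block i := (hblock i s).2 ⟨by simp [hs]; omega, by simp [hs]; omega⟩
      have hsu : (s : ℕ) + 1 = (u : ℕ) := by simp [hs]; omega
      rw [hNsucc i s u hsi hui hsu]
      have hslt : s < u := by
        rw [Fin.lt_def]; omega
      have hws : w s < w u := hw i s hsi u hui hslt
      have hwu : w u = t := by simp [hu]
      have : (w s : ℕ) < j := by
        have : (w s : ℕ) < (t : ℕ) := by rw [← hwu]; exact hws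
        omega
      apply Submodule.subset_span
      exact ⟨w s, this, by simp⟩
  intro x hx
  have : Submodule.span K S ≤ (Submodule.span K S).comap N :=
    Submodule.span_le.2 hsub
  exact this hx
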